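/- Set A := {(u·(2|u|)^∞, u·(2|u|+1)^∞) : u ∈ ω^{<ω}} ⊆ ω^ω × ω^ω and C^ε_i := {u·(2i+ε)^∞ : u ∈ ω^i} for (ε,i) ∈ 2×ω. Then there is no continuous f: ω^ω → ω^ω with ⋃_i C⁰_i × C¹_i ⊆ (f×f)^{-1}(A). Indeed, any such f would be constant. -/
import Mathlib


/-- Concatenation of a finite sequence of naturals with an infinite one. -/
def catN (u : List ℕ) (γ : ℕ → ℕ) : ℕ → ℕ :=
  fun n => u.getD n (γ (n - u.length))

/-- `A := {(u·(2|u|)^∞, u·(2|u|+1)^∞) : u ∈ ω^{<ω}}`. -/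
def Arel : Set ((ℕ → ℕ) × (ℕ → ℕ)) :=
  {p | ∃ u : List ℕ, p = (catN u fun _ => 2 * u.length, catN u fun _ => 2 * u.length + 1)}

/-- `C^ε_i := {u·(2i+ε)^∞ : u ∈ ω^i}`. -/
def Ceps (ε : Bool) (i : ℕ) : Set (ℕ → ℕ) :=
  {x | ∃ u : List ℕ, u.length = i ∧ x = catN u fun _ => 2 * i + (if ε then 1 else 0)}

lemma catN_ge (u : List ℕ) (γ : ℕ → ℕ) {n : ℕ} (h : u.length ≤ n) :
    catN u γ n = γ (n - u.length) := by
  simp [catN, List.getElem?_eq_none h]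

lemma catN_lt (u : List ℕ) (γ : ℕ → ℕ) {n : ℕ} (h : n < u.length) :
    catN u γ n = u[n] := by
  simp [catN, List.getElem?_eq_getElem h]

lemma Arel_left_unique {p p' q : ℕ → ℕ} (h : (p, q) ∈ Arel) (h' : (p', q) ∈ Arel) :
    p = p' := by
  obtain ⟨u, hu⟩ := h
  obtain ⟨v, hv⟩ := h'
  rw [Prod.mk.injEq] at hu hv
  have hlen : u.length = v.length := by
    have e1 := congrFun hu.2 (max u.length v.length)
    have e2 := congrFun hv.2 (max u.length v.length)
    rw [catN_ge _ _ (le_max_left _ _)] at e1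
    rw [catN_ge _ _ (le_max_right _ _)] at e2
    omega
  have huv : u = v := by
    apply List.ext_getElem hlen
    intro n h1 h2
    have e1 := congrFun hu.2 n
    have e2 := congrFun hv.2 n
    rw [catN_lt _ _ h1] at e1
    rw [catN_lt _ _ h2] at e2
    rw [← e1, ← e2]
  rw [hu.1, hv.1, huv]

lemma tendsto_catN (α : ℕ → ℕ) (g : ℕ → ℕ → ℕ) :
    Filter.Tendsto (fun i => catN (List.ofFn fun k : Fin i => α k) (g i))
      Filter.atTop (nhds α) := by
  rw [tendsto_pi_nhds]
  intro n
  apply tendsto_const_nhds.congr'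
  filter_upwards [Filter.eventually_ge_atTop (n + 1)] with i hi
  rw [catN_lt _ _ (by simpa using hi)]
  simp

/-- there is no continuous `f : ω^ω → ω^ω` with
`⋃_i C⁰_i × C¹_i ⊆ (f × f)⁻¹(A)`. -/
theorem stmt10 :
    ¬ ∃ f : (ℕ → ℕ) → (ℕ → ℕ), Continuous f ∧
      ∀ x y, (∃ i, x ∈ Ceps false i ∧ y ∈ Ceps true i) → (f x, f y) ∈ Arel := by
  rintro ⟨f, hf, hA⟩
  have hmem0 : ∀ (α : ℕ → ℕ) i,
      catN (List.ofFn fun k : Fin i => α k) (fun _ => 2 * i) ∈ Ceps false i :=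
    fun α i => ⟨List.ofFn fun k : Fin i => α k, by simp, by simp⟩
  have hmem1 : ∀ (α : ℕ → ℕ) i,
      catN (List.ofFn fun k : Fin i => α k) (fun _ => 2 * i + 1) ∈ Ceps true i :=
    fun α i => ⟨List.ofFn fun k : Fin i => α k, by simp, by simp⟩
  have hconst : ∀ α : ℕ → ℕ, f α = f (fun _ => 0) := by
    intro α
    have h1 : Filter.Tendsto
        (fun i => f (catN (List.ofFn fun k : Fin i => α k) (fun _ => 2 * i)))
        Filter.atTop (nhds (f α)) := (hf.tendsto α).comp (tendsto_catN α _)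
    have h2 : Filter.Tendsto
        (fun i => f (catN (List.ofFn fun k : Fin i => (fun _ => 0 : ℕ → ℕ) k) (fun _ => 2 * i)))
        Filter.atTop (nhds (f (fun _ => 0))) :=
      (hf.tendsto _).comp (tendsto_catN _ _)
    refine tendsto_nhds_unique h1 ?_
    have heq : ∀ i : ℕ,
        f (catN (List.ofFn fun k : Fin i => α k) (fun _ => 2 * i)) =
        f (catN (List.ofFn fun k : Fin i => (fun _ => 0 : ℕ → ℕ) k) (fun _ => 2 * i)) := by
      intro i
      exact Arel_left_unique
        (hA _ _ ⟨i, hmem0 α i, hmem1 (fun _ => 0) i⟩)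
        (hA _ _ ⟨i, hmem0 (fun _ => 0) i, hmem1 (fun _ => 0) i⟩)
    exact (funext heq : _) ▸ h2
  have hx : (fun _ => 0 : ℕ → ℕ) ∈ Ceps false 0 :=
    ⟨[], rfl, by funext n; simp [catN]⟩
  have hy : (fun _ => 1 : ℕ → ℕ) ∈ Ceps true 0 :=
    ⟨[], rfl, by funext n; simp [catN]⟩
  obtain ⟨u, hu⟩ := hA _ _ ⟨0, hx, hy⟩
  rw [Prod.mk.injEq] at hu
  have e1 := congrFun hu.1 u.length
  have e2 := congrFun hu.2 u.length
  rw [catN_ge _ _ le_rfl] at e1 e2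
  rw [hconst (fun _ => 1)] at e2
  omega
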